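/- For positive integers a, b, the product a·b·(a² + b²) is never a perfect square. -/

import Mathlib

lemma coprime_case (a b c : ℕ) (ha : 0 < a) (hb : 0 < b) (hab : Nat.Coprime a b)
    (h : a * b * (a ^ 2 + b ^ 2) = c ^ 2) : False := by
  have hca : Nat.Coprime a (a ^ 2 + b ^ 2) := by
    have h1 : Nat.Coprime a (b ^ 2) := hab.pow_right 2
    have h2 : a ^ 2 + b ^ 2 = b ^ 2 + a * a := by ring
    rw [h2]
    exact (Nat.coprime_add_mul_right_right a (b ^ 2) a).mpr h1
  have hcb : Nat.Coprime b (a ^ 2 + b ^ 2) := by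
    have h1 : Nat.Coprime b (a ^ 2) := (hab.symm).pow_right 2
    have h2 : a ^ 2 + b ^ 2 = a ^ 2 + b * b := by ring
    rw [h2]
    exact (Nat.coprime_add_mul_right_right b (a ^ 2) b).mpr h1
  have hcmul : Nat.Coprime (a * b) (a ^ 2 + b ^ 2) := Nat.Coprime.mul hca hcb
  obtain ⟨d, hd⟩ := exists_eq_pow_of_mul_eq_pow (α := ℕ)
    (by rw [Nat.isUnit_iff]; exact hcmul) h
  have h2 : (a ^ 2 + b ^ 2) * (a * b) = c ^ 2 := by rw [mul_comm]; exact h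
  obtain ⟨e, he⟩ := exists_eq_pow_of_mul_eq_pow (α := ℕ)
    (by rw [Nat.isUnit_iff]; exact hcmul.symm) h2
  obtain ⟨u, hu⟩ := exists_eq_pow_of_mul_eq_pow (α := ℕ)
    (by rw [Nat.isUnit_iff]; exact hab) hd
  obtain ⟨v, hv⟩ := exists_eq_pow_of_mul_eq_pow (α := ℕ)
    (by rw [Nat.isUnit_iff]; exact hab.symm) (show b * a = d ^ 2 by rw [mul_comm]; exact hd)
  have hkey : u ^ 4 + v ^ 4 = e ^ 2 := by
    have h3 : a ^ 2 + b ^ 2 = e ^ 2 := he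
    rw [hu, hv] at h3
    rw [← h3]; ring
  have hu0 : (u : ℤ) ≠ 0 := by
    simp only [ne_eq, Int.natCast_eq_zero]
    rintro rfl; simp at hu; omega
  have hv0 : (v : ℤ) ≠ 0 := by
    simp only [ne_eq, Int.natCast_eq_zero]
    rintro rfl; simp at hv; omega
  have hkeyZ : (u : ℤ) ^ 4 + (v : ℤ) ^ 4 = (e : ℤ) ^ 2 := by exact_mod_cast hkey
  exact not_fermat_42 hu0 hv0 hkeyZ

theorem stmt_9 (a b : ℕ) (ha : 0 < a) (hb : 0 < b) :
    ¬ IsSquare (a * b * (a ^ 2 + b ^ 2)) := by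
  rintro ⟨c, hc⟩
  obtain ⟨a', ha'⟩ := Nat.gcd_dvd_left a b
  obtain ⟨b', hb'⟩ := Nat.gcd_dvd_right a b
  set g := Nat.gcd a b with hg
  have hg0 : 0 < g := Nat.gcd_pos_of_pos_left b ha
  have ha'0 : 0 < a' := by
    rcases Nat.eq_zero_or_pos a' with h | h
    · rw [h, mul_zero] at ha'; omega
    · exact h
  have hb'0 : 0 < b' := by
    rcases Nat.eq_zero_or_pos b' with h | h
    · rw [h, mul_zero] at hb'; omega
    · exact h
  have hcop : Nat.Coprime a' b' := by
    have hda : a' = a / g := by rw [ha', Nat.mul_div_cancel_left _ hg0]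
    have hdb : b' = b / g := by rw [hb', Nat.mul_div_cancel_left _ hg0]
    rw [hda, hdb]
    exact Nat.coprime_div_gcd_div_gcd hg0
  -- g^4 * (a' * b' * (a'^2 + b'^2)) = c^2
  have heq : g ^ 4 * (a' * b' * (a' ^ 2 + b' ^ 2)) = c ^ 2 := by
    have hcc : c ^ 2 = c * c := sq c
    rw [hcc, ← hc, ha', hb']; ring
  have hdvd : g ^ 2 ∣ c := by
    have : (g ^ 2) ^ 2 ∣ c ^ 2 := ⟨a' * b' * (a' ^ 2 + b' ^ 2), by rw [← heq]; ring⟩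
    exact (Nat.pow_dvd_pow_iff (by norm_num)).mp this
  obtain ⟨c', hc'⟩ := hdvd
  have heq2 : a' * b' * (a' ^ 2 + b' ^ 2) = c' ^ 2 := by
    have h4 : 0 < g ^ 4 := by positivity
    apply Nat.eq_of_mul_eq_mul_left h4
    rw [heq, hc']; ring
  exact coprime_case a' b' c' ha'0 hb'0 hcop heq2
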